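/- arXiv:0712.1875 — 5 statements merged into one kernel-verified Lean document; each statement's English description precedes it below -/
import Mathlib

section
/- There exist a minimal integer n ≥ 0 and polynomials p, q_0, …, q_n ∈ ℂ[t] with q_n ≠ 0 such that the family {p, q_0, …, q_n} is coprime (no nonconstant polynomial divides all of them) and ∑_{ι=0}^{n} q_ι(t)·x^{(ι)}(t) = p(t) for all t ∈ ℝ. Moreover this minimal equation is unique up to a nonzero multiplicative constant: if p', q'_0, …, q'_n ∈ ℂ[t] is another coprime family with q'_n ≠ 0 satisfying ∑_{ι=0}^{n} q'_ι(t)·x^{(ι)}(t) = p'(t) for all t ∈ ℝ, then there is a nonzero constant c ∈ ℂ with p' = c·p and q'_ι = c·q_ι for all ι. -/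
open Polynomial

private lemma poly_eq_zero_of_real_eval {P : ℂ[X]} (h : ∀ t : ℝ, P.eval (t : ℂ) = 0) :
    P = 0 := by
  apply P.eq_zero_of_infinite_isRoot
  exact Set.infinite_of_injective_forall_mem (f := fun t : ℝ => (t : ℂ))
    Complex.ofReal_injective (fun t => h t)

private lemma cancel_poly {d : ℂ[X]} (hd : d ≠ 0) {f : ℝ → ℂ}
    (hf : Continuous f) (h : ∀ t : ℝ, d.eval (t : ℂ) * f t = 0) : ∀ t, f t = 0 := by
  have hS : {t : ℝ | d.eval (t : ℂ) = 0}.Finite := by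
    have : {t : ℝ | d.eval (t : ℂ) = 0} ⊆ (fun t : ℝ => (t : ℂ)) ⁻¹' {z | d.IsRoot z} := by
      intro t ht; exact ht
    exact Set.Finite.subset ((Polynomial.finite_setOf_isRoot hd).preimage
      (Set.injOn_of_injective Complex.ofReal_injective)) this
  have hdense : Dense {t : ℝ | d.eval (t : ℂ) = 0}ᶜ :=
    Set.Countable.dense_compl ℝ hS.countable
  have : f = fun _ => (0 : ℂ) := by
    apply Continuous.ext_on hdense hf continuous_const
    intro t ht
    have hdt : d.eval (t : ℂ) ≠ 0 := ht
    have := h t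
    rcases mul_eq_zero.mp this with h1 | h2
    · exact absurd h1 hdt
    · exact h2
  exact fun t => by rw [this]

/-- existence and essential uniqueness of the minimal (possibly
inhomogeneous) linear differential equation with polynomial coefficients
satisfied by a nonzero analytic signal `x`. -/
theorem minimal_equation_exists_unique
    (x : ℝ → ℂ) (hx : AnalyticOnNhd ℝ x Set.univ) (hx0 : x ≠ 0)
    (hode : ∃ (m : ℕ) (a : Fin (m + 1) → ℂ[X]), (∃ ν, a ν ≠ 0) ∧
      ∀ t : ℝ, ∑ ν, (a ν).eval (t : ℂ) * iteratedDeriv (ν : ℕ) x t = 0) :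
    ∃ n : ℕ,
      -- minimality of n
      (∀ m : ℕ, m < n →
        ¬ ∃ (p : ℂ[X]) (q : Fin (m + 1) → ℂ[X]),
            q (Fin.last m) ≠ 0 ∧
            (¬ ∃ d : ℂ[X], 0 < d.natDegree ∧ d ∣ p ∧ ∀ ι, d ∣ q ι) ∧
            (∀ t : ℝ, ∑ ι, (q ι).eval (t : ℂ) * iteratedDeriv (ι : ℕ) x t
              = p.eval (t : ℂ))) ∧
      -- existence of a coprime equation of order n
      ∃ (p : ℂ[X]) (q : Fin (n + 1) → ℂ[X]),
        q (Fin.last n) ≠ 0 ∧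
        (¬ ∃ d : ℂ[X], 0 < d.natDegree ∧ d ∣ p ∧ ∀ ι, d ∣ q ι) ∧
        (∀ t : ℝ, ∑ ι, (q ι).eval (t : ℂ) * iteratedDeriv (ι : ℕ) x t
          = p.eval (t : ℂ)) ∧
        -- uniqueness up to a nonzero multiplicative constant
        (∀ (p' : ℂ[X]) (q' : Fin (n + 1) → ℂ[X]),
          q' (Fin.last n) ≠ 0 →
          (¬ ∃ d : ℂ[X], 0 < d.natDegree ∧ d ∣ p' ∧ ∀ ι, d ∣ q' ι) →
          (∀ t : ℝ, ∑ ι, (q' ι).eval (t : ℂ) * iteratedDeriv (ι : ℕ) x t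
            = p'.eval (t : ℂ)) →
          ∃ c : ℂ, c ≠ 0 ∧ p' = C c * p ∧ ∀ ι, q' ι = C c * q ι) := by
  classical
  -- continuity of all iterated derivatives
  have hcont : ∀ k : ℕ, Continuous (iteratedDeriv k x) := by
    intro k
    rw [iteratedDeriv_eq_iterate]
    exact continuousOn_univ.mp (hx.iterated_deriv k).continuousOn
  set Pred : ℕ → Prop := fun m =>
    ∃ (p : ℂ[X]) (q : Fin (m + 1) → ℂ[X]),
      q (Fin.last m) ≠ 0 ∧
      (¬ ∃ d : ℂ[X], 0 < d.natDegree ∧ d ∣ p ∧ ∀ ι, d ∣ q ι) ∧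
      (∀ t : ℝ, ∑ ι, (q ι).eval (t : ℂ) * iteratedDeriv (ι : ℕ) x t
        = p.eval (t : ℂ)) with hPred
  -- key normalization lemma
  have key : ∀ (N : ℕ) (p : ℂ[X]) (A : ℕ → ℂ[X]), A N ≠ 0 →
      (∀ t : ℝ, ∑ k ∈ Finset.range (N + 1),
        (A k).eval (t : ℂ) * iteratedDeriv k x t = p.eval (t : ℂ)) → Pred N := by
    intro N p A hAN heq
    set F : Option (Fin (N + 1)) → ℂ[X] := fun o => o.elim p (fun j => A j) with hF
    obtain ⟨h, hFh, hgcd1⟩ := Finset.extract_gcd F Finset.univ_nonempty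
    set g : ℂ[X] := Finset.univ.gcd F with hg
    have hFlast : F (some (Fin.last N)) = A N := by simp [hF]
    have hg0 : g ≠ 0 := by
      intro h0
      exact hAN (by rw [← hFlast]; exact Finset.gcd_eq_zero_iff.mp h0 _ (Finset.mem_univ _))
    refine ⟨h none, fun j => h (some j), ?_, ?_, ?_⟩
    · intro h0
      apply hAN
      rw [← hFlast, hFh (some (Fin.last N)) (Finset.mem_univ _)]
      exact mul_eq_zero_of_right _ h0
    · rintro ⟨d, hd, hdp, hdq⟩
      have hdvd : d ∣ Finset.univ.gcd h := by
        apply Finset.dvd_gcd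
        rintro (_ | i) _
        · exact hdp
        · exact hdq i
      rw [hgcd1] at hdvd
      have : IsUnit d := isUnit_of_dvd_one hdvd
      exact absurd (natDegree_eq_zero_of_isUnit this) (by omega)
    · set f : ℝ → ℂ := fun t =>
        (∑ ι : Fin (N + 1), (h (some ι)).eval (t : ℂ) * iteratedDeriv (ι : ℕ) x t)
          - (h none).eval (t : ℂ) with hf
      have hfc : Continuous f := by
        apply Continuous.sub
        · exact continuous_finset_sum _ fun ι _ =>
            ((Polynomial.continuous _).comp Complex.continuous_ofReal).mul (hcont _)
        · exact (Polynomial.continuous _).comp Complex.continuous_ofReal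
      have hzero : ∀ t : ℝ, g.eval (t : ℂ) * f t = 0 := by
        intro t
        have e1 : ∀ ι : Fin (N + 1), g * h (some ι) = A ι := fun ι =>
          (hFh (some ι) (Finset.mem_univ _)).symm
        have e2 : g * h none = p := (hFh none (Finset.mem_univ _)).symm
        have : g.eval (t : ℂ) * f t =
            (∑ ι : Fin (N + 1), (A (ι : ℕ)).eval (t : ℂ) * iteratedDeriv (ι : ℕ) x t)
              - p.eval (t : ℂ) := by
          rw [hf]
          rw [mul_sub, Finset.mul_sum]
          congr 1
          · apply Finset.sum_congr rfl
            intro ι _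
            rw [← mul_assoc, ← eval_mul, e1 ι]
          · rw [← eval_mul, e2]
        rw [this, Fin.sum_univ_eq_sum_range
          (fun k => (A k).eval (t : ℂ) * iteratedDeriv k x t) (N + 1), heq t, sub_self]
      intro t
      have := cancel_poly hg0 hfc hzero t
      rw [hf] at this
      exact sub_eq_zero.mp this
  -- existence of some order
  have hP : ∃ m, Pred m := by
    obtain ⟨m, a, ⟨ν0, hν0⟩, heq⟩ := hode
    set A : ℕ → ℂ[X] := fun k => if hk : k < m + 1 then a ⟨k, hk⟩ else 0 with hA
    have hAν0 : A (ν0 : ℕ) ≠ 0 := by simp [hA, ν0.isLt]; exact ⟨Nat.le_of_lt_succ ν0.isLt, hν0⟩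
    set μ : ℕ := Nat.findGreatest (fun k => A k ≠ 0) m with hμdef
    have hμ : A μ ≠ 0 := Nat.findGreatest_spec (P := fun k => A k ≠ 0) (Nat.le_of_lt_succ ν0.isLt) hAν0
    have hμle : μ ≤ m := Nat.findGreatest_le m
    have hgr : ∀ k, μ < k → A k = 0 := by
      intro k hk
      by_cases hkm : k ≤ m
      · by_contra hne
        exact Nat.findGreatest_is_greatest hk hkm hne
      · simp [hA]; omega
    refine ⟨μ, key μ 0 A hμ ?_⟩
    intro t
    have hsub : ∑ k ∈ Finset.range (μ + 1), (A k).eval (t : ℂ) * iteratedDeriv k x t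
        = ∑ k ∈ Finset.range (m + 1), (A k).eval (t : ℂ) * iteratedDeriv k x t := by
      apply Finset.sum_subset
      · intro k hk
        simp only [Finset.mem_range] at hk ⊢
        omega
      · intro k _ hk
        simp only [Finset.mem_range, not_lt] at hk
        rw [hgr k (by omega), eval_zero, zero_mul]
    rw [hsub, ← Fin.sum_univ_eq_sum_range
      (fun k => (A k).eval (t : ℂ) * iteratedDeriv k x t) (m + 1)]
    have : ∀ ν : Fin (m + 1), A (ν : ℕ) = a ν := by
      intro ν; simp [hA, ν.isLt]; intro h; have := ν.isLt; omega
    rw [eval_zero]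
    rw [← heq t]
    exact Finset.sum_congr rfl fun ν _ => by rw [this ν]
  set n := Nat.find hP with hn
  refine ⟨n, fun m hm => Nat.find_min hP hm, ?_⟩
  obtain ⟨p, q, hqn, hcop, heqn⟩ := Nat.find_spec hP
  -- a helper: coprime families have unit gcd
  have unit_gcd : ∀ (P : ℂ[X]) (Q : Fin (n + 1) → ℂ[X]), Q (Fin.last n) ≠ 0 →
      (¬ ∃ d : ℂ[X], 0 < d.natDegree ∧ d ∣ P ∧ ∀ ι, d ∣ Q ι) →
      IsUnit (Finset.univ.gcd (fun o : Option (Fin (n + 1)) => o.elim P Q)) := by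
    intro P Q hQ hcopr
    set G := Finset.univ.gcd (fun o : Option (Fin (n + 1)) => o.elim P Q) with hG
    have hG0 : G ≠ 0 := by
      intro h0
      exact hQ (Finset.gcd_eq_zero_iff.mp h0 (some (Fin.last n)) (Finset.mem_univ _))
    have hGdeg : G.natDegree = 0 := by
      by_contra hne
      exact hcopr ⟨G, by omega,
        Finset.gcd_dvd (f := fun o : Option (Fin (n + 1)) => o.elim P Q) (Finset.mem_univ none),
        fun ι => Finset.gcd_dvd (f := fun o : Option (Fin (n + 1)) => o.elim P Q) (Finset.mem_univ (some ι))⟩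
    obtain ⟨c, hc⟩ := natDegree_eq_zero.mp hGdeg
    rw [← hc]
    exact isUnit_C.mpr (isUnit_iff_ne_zero.mpr (fun h0 => hG0 (by rw [← hc, h0, map_zero])))
  refine ⟨p, q, hqn, hcop, heqn, ?_⟩
  intro p' q' hq'n hcop' heqn'
  set qn := q (Fin.last n) with hqndef
  set q'n := q' (Fin.last n) with hq'ndef
  set r : Fin (n + 1) → ℂ[X] := fun ι => q'n * q ι - qn * q' ι with hrdef
  set s : ℂ[X] := q'n * p - qn * p' with hsdef
  have hrs : ∀ t : ℝ, ∑ ι : Fin (n + 1), (r ι).eval (t : ℂ) * iteratedDeriv (ι : ℕ) x t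
      = s.eval (t : ℂ) := by
    intro t
    simp only [hrdef, hsdef, eval_sub, eval_mul, sub_mul, mul_assoc, Finset.sum_sub_distrib]
    rw [← Finset.mul_sum, ← Finset.mul_sum, heqn t, heqn' t]
  by_cases hr : ∀ ι, r ι = 0
  · -- proportional case
    have hs0 : s = 0 := by
      apply poly_eq_zero_of_real_eval
      intro t
      rw [← hrs t]
      apply Finset.sum_eq_zero
      intro ι _
      rw [hr ι, eval_zero, zero_mul]
    have hqq : ∀ ι, q'n * q ι = qn * q' ι := fun ι => sub_eq_zero.mp (hr ι)
    have hpp : q'n * p = qn * p' := sub_eq_zero.mp hs0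
    -- qn ∣ q'n
    have dvd1 : qn ∣ q'n := by
      have hGunit := unit_gcd p q hqn hcop
      obtain ⟨u, hu⟩ := hGunit
      have hdvd : qn ∣ Finset.univ.gcd
          (fun o : Option (Fin (n + 1)) => q'n * (o.elim p q)) := by
        apply Finset.dvd_gcd
        rintro (_ | i) _
        · exact ⟨p', by simpa using hpp⟩
        · exact ⟨q' i, by simpa using (hqq i)⟩
      rw [Finset.gcd_mul_left, ← hu] at hdvd
      rw [mul_comm] at hdvd
      exact dvd_normalize_iff.mp (Units.dvd_mul_left.mp hdvd)
    have dvd2 : q'n ∣ qn := by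
      have hGunit := unit_gcd p' q' hq'n hcop'
      obtain ⟨u, hu⟩ := hGunit
      have hdvd : q'n ∣ Finset.univ.gcd
          (fun o : Option (Fin (n + 1)) => qn * (o.elim p' q')) := by
        apply Finset.dvd_gcd
        rintro (_ | i) _
        · exact ⟨p, by simpa using hpp.symm⟩
        · exact ⟨q i, by simpa using (hqq i).symm⟩
      rw [Finset.gcd_mul_left, ← hu] at hdvd
      rw [mul_comm] at hdvd
      exact dvd_normalize_iff.mp (Units.dvd_mul_left.mp hdvd)
    obtain ⟨u, hu⟩ := associated_of_dvd_dvd dvd1 dvd2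
    obtain ⟨c, hcu, hcC⟩ := Polynomial.isUnit_iff.mp u.isUnit
    have hc0 : c ≠ 0 := hcu.ne_zero
    have hq'nc : q'n = C c * qn := by rw [← hu, ← hcC]; ring
    refine ⟨c, hc0, ?_, ?_⟩
    · apply mul_left_cancel₀ hqn
      rw [← hpp, hq'nc]; ring
    · intro ι
      apply mul_left_cancel₀ hqn
      rw [← hqq ι, hq'nc]; ring
  · -- elimination: contradiction with minimality
    exfalso
    push_neg at hr
    obtain ⟨ι0, hι0⟩ := hr
    set R : ℕ → ℂ[X] := fun k => if hk : k < n + 1 then r ⟨k, hk⟩ else 0 with hR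
    have hRι0 : R (ι0 : ℕ) ≠ 0 := by simp [hR, ι0.isLt]; exact ⟨Nat.le_of_lt_succ ι0.isLt, hι0⟩
    set κ : ℕ := Nat.findGreatest (fun k => R k ≠ 0) n with hκdef
    have hκ : R κ ≠ 0 := Nat.findGreatest_spec (P := fun k => R k ≠ 0) (Nat.le_of_lt_succ ι0.isLt) hRι0
    have hκle : κ ≤ n := Nat.findGreatest_le n
    have hκn : κ < n := by
      rcases Nat.lt_or_ge κ n with h | h
      · exact h
      · exfalso
        have hκeq : κ = n := le_antisymm hκle h
        apply hκ
        rw [hκeq]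
        have : R n = r (Fin.last n) := by
          simp [hR]
          congr 1
        rw [this]
        simp [hrdef, hqndef, hq'ndef, mul_comm]
    have hgr : ∀ k, κ < k → R k = 0 := by
      intro k hk
      by_cases hkn : k ≤ n
      · by_contra hne
        exact Nat.findGreatest_is_greatest hk hkn hne
      · simp [hR]; omega
    have heqκ : ∀ t : ℝ, ∑ k ∈ Finset.range (κ + 1),
        (R k).eval (t : ℂ) * iteratedDeriv k x t = s.eval (t : ℂ) := by
      intro t
      have hsub : ∑ k ∈ Finset.range (κ + 1), (R k).eval (t : ℂ) * iteratedDeriv k x t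
          = ∑ k ∈ Finset.range (n + 1), (R k).eval (t : ℂ) * iteratedDeriv k x t := by
        apply Finset.sum_subset
        · intro k hk
          simp only [Finset.mem_range] at hk ⊢
          omega
        · intro k _ hk
          simp only [Finset.mem_range, not_lt] at hk
          rw [hgr k (by omega), eval_zero, zero_mul]
      rw [hsub, ← Fin.sum_univ_eq_sum_range
        (fun k => (R k).eval (t : ℂ) * iteratedDeriv k x t) (n + 1), ← hrs t]
      apply Finset.sum_congr rfl
      intro ι _
      congr 2
      simp [hR, ι.isLt]; intro h; have := ι.isLt; omega
    exact Nat.find_min hP hκn (key κ s R hκ heqκ)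
end

section
/- If the functions f_1, …, f_m are linearly independent over ℂ (as elements of the vector space of functions ℝ → ℂ), then their Wronskian is not identically zero: there exists t ∈ ℝ such that the m × m matrix whose (i, j) entry is the i-th derivative f_j^{(i)}(t) (0 ≤ i ≤ m−1, 1 ≤ j ≤ m) has nonzero determinant. -/
open Matrix Set

lemma analytic_iteratedDeriv {f : ℝ → ℂ} (hf : AnalyticOnNhd ℝ f Set.univ) (n : ℕ) :
    AnalyticOnNhd ℝ (iteratedDeriv n f) Set.univ := by
  induction n with
  | zero => simpa [iteratedDeriv_zero] using hf
  | succ n ih => rw [iteratedDeriv_succ]; exact ih.deriv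

lemma analytic_det {k : ℕ} {A : Fin k → Fin k → ℝ → ℂ} {s : Set ℝ}
    (hA : ∀ i j, AnalyticOnNhd ℝ (A i j) s) :
    AnalyticOnNhd ℝ (fun t => (Matrix.of fun i j => A i j t).det) s := by
  simp only [Matrix.det_apply]
  apply Finset.analyticOnNhd_fun_sum
  intro σ _
  have : (fun t => Equiv.Perm.sign σ • ∏ i, (Matrix.of fun i j => A i j t) (σ i) i)
      = fun t => ((Equiv.Perm.sign σ : ℤ) : ℂ) * ∏ i, A (σ i) i t := by
    funext t
    simp [Units.smul_def, zsmul_eq_mul]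
  rw [this]
  exact analyticOnNhd_const.mul (Finset.analyticOnNhd_fun_prod _ fun i _ => hA (σ i) i)

lemma mulVec_cancel {k : ℕ} {M : Matrix (Fin k) (Fin k) ℂ} (hM : M.det ≠ 0)
    {d e : Fin k → ℂ} (h : M *ᵥ d = M *ᵥ e) : d = e := by
  by_contra hne
  apply hM
  rw [← Matrix.exists_mulVec_eq_zero_iff]
  exact ⟨d - e, sub_ne_zero.mpr hne, by rw [Matrix.mulVec_sub, h, sub_self]⟩

/-- the Wronskian of finitely many linearly independent
real-analytic functions is not identically zero. -/
theorem wronskian_of_linearIndependent_analytic_ne_zero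
    (m : ℕ) (f : Fin m → ℝ → ℂ)
    (hf : ∀ j, AnalyticOnNhd ℝ (f j) Set.univ)
    (hli : LinearIndependent ℂ f) :
    ∃ t : ℝ,
      (Matrix.of fun i j : Fin m => iteratedDeriv (i : ℕ) (f j) t).det ≠ 0 := by
  induction m with
  | zero => exact ⟨0, by simp [Matrix.det_fin_zero]⟩
  | succ m ih =>
    by_contra hcon
    push_neg at hcon
    set g : Fin m → ℝ → ℂ := fun j => f j.castSucc with hgdef
    obtain ⟨t₀, ht₀⟩ := ih g (fun j => hf _) (hli.comp Fin.castSucc (Fin.castSucc_injective m))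
    set M : ℝ → Matrix (Fin m) (Fin m) ℂ :=
      fun t => Matrix.of fun i j => iteratedDeriv (i : ℕ) (g j) t with hMdef
    set v : ℝ → Fin m → ℂ := fun t i => iteratedDeriv (i : ℕ) (f (Fin.last m)) t with hvdef
    set U : Set ℝ := {t | (M t).det ≠ 0} with hUdef
    have ht₀U : t₀ ∈ U := ht₀
    have hMana : AnalyticOnNhd ℝ (fun t => (M t).det) Set.univ :=
      analytic_det (fun i j => analytic_iteratedDeriv (hf _) i)
    have hUopen : IsOpen U := by
      have hcont : Continuous fun t => (M t).det := by
        rw [← continuousOn_univ]; exact hMana.continuousOn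
      exact isOpen_compl_singleton.preimage hcont
    set c : ℝ → Fin m → ℂ := fun t => ((M t).det)⁻¹ • (M t).cramer (v t) with hcdef
    have hsys : ∀ t ∈ U, M t *ᵥ c t = v t := by
      intro t ht
      rw [hcdef]
      rw [Matrix.mulVec_smul, Matrix.mulVec_cramer, smul_smul,
        inv_mul_cancel₀ ht, one_smul]
    have huniq : ∀ t ∈ U, ∀ d, M t *ᵥ d = v t → d = c t :=
      fun t ht d hd => mulVec_cancel ht (hd.trans (hsys t ht).symm)
    have hext : ∀ t ∈ U, ∀ i : Fin (m + 1),
        ∑ j : Fin m, c t j * iteratedDeriv (i : ℕ) (g j) t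
          = iteratedDeriv (i : ℕ) (f (Fin.last m)) t := by
      intro t ht
      obtain ⟨w, hw0, hw⟩ := Matrix.exists_mulVec_eq_zero_iff.mpr (hcon t)
      have hwlast : w (Fin.last m) ≠ 0 := by
        intro hlast
        apply ht
        rw [← Matrix.exists_mulVec_eq_zero_iff]
        refine ⟨fun j => w j.castSucc, ?_, ?_⟩
        · intro hz
          apply hw0
          funext j
          refine Fin.lastCases hlast (fun j => ?_) j
          exact congrFun hz j
        · funext i
          have h1 := congrFun hw i.castSucc
          simp only [Matrix.mulVec, dotProduct, Pi.zero_apply, Matrix.of_apply] at h1 ⊢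
          rw [Fin.sum_univ_castSucc] at h1
          simp only [hlast, mul_zero, add_zero] at h1
          simpa [hMdef] using h1
      set d : Fin m → ℂ := fun j => -(w (Fin.last m))⁻¹ * w j.castSucc with hddef
      have hd : ∀ i : Fin (m + 1),
          ∑ j : Fin m, d j * iteratedDeriv (i : ℕ) (g j) t
            = iteratedDeriv (i : ℕ) (f (Fin.last m)) t := by
        intro i
        have h1 := congrFun hw i
        simp only [Matrix.mulVec, dotProduct, Pi.zero_apply, Matrix.of_apply] at h1
        rw [Fin.sum_univ_castSucc] at h1
        have h2 : ∑ j : Fin m, iteratedDeriv (i : ℕ) (g j) t * w j.castSucc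
            = -(iteratedDeriv (i : ℕ) (f (Fin.last m)) t * w (Fin.last m)) := by
          rw [eq_neg_iff_add_eq_zero]; exact h1
        calc ∑ j : Fin m, d j * iteratedDeriv (i : ℕ) (g j) t
            = -(w (Fin.last m))⁻¹
                * ∑ j : Fin m, iteratedDeriv (i : ℕ) (g j) t * w j.castSucc := by
              rw [Finset.mul_sum]
              exact Finset.sum_congr rfl fun j _ => by rw [hddef]; ring
          _ = iteratedDeriv (i : ℕ) (f (Fin.last m)) t := by
              rw [h2]; field_simp
      have hdc : d = c t := by
        apply huniq t ht
        funext i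
        simp only [Matrix.mulVec, dotProduct, hMdef, Matrix.of_apply, hvdef]
        have h5 := hd i.castSucc
        simp only [Fin.coe_castSucc] at h5
        rw [← h5]
        exact Finset.sum_congr rfl fun j _ => by ring
      intro i
      rw [← hdc]
      exact hd i
    have hcana : ∀ j : Fin m, AnalyticOnNhd ℝ (fun t => c t j) U := by
      intro j
      have hinv : AnalyticOnNhd ℝ (fun t => ((M t).det)⁻¹) U :=
        (hMana.mono (Set.subset_univ U)).inv (fun t ht => ht)
      have hcr : AnalyticOnNhd ℝ (fun t => ((M t).updateCol j (v t)).det) U := by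
        have heq : (fun t => ((M t).updateCol j (v t)).det)
            = fun t => (Matrix.of fun i k : Fin m =>
                (fun i k t => if k = j then v t i else iteratedDeriv (i : ℕ) (g k) t) i k t).det := by
          funext t
          congr 1
          ext i k
          rw [Matrix.updateCol_apply]
          rfl
        rw [heq]
        apply analytic_det
        intro i k
        by_cases hk : k = j
        · subst hk
          simpa [hvdef] using
            ((analytic_iteratedDeriv (hf (Fin.last m)) (i : ℕ)).mono (Set.subset_univ U))
        · simpa [hk] using
            ((analytic_iteratedDeriv (hf k.castSucc) (i : ℕ)).mono (Set.subset_univ U))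
      have heq2 : (fun t => c t j)
          = fun t => ((M t).det)⁻¹ * ((M t).updateCol j (v t)).det := by
        funext t
        rw [hcdef]
        simp [Matrix.cramer_apply, smul_eq_mul]
      rw [heq2]
      exact hinv.mul hcr
    have hderiv0 : ∀ t ∈ U, ∀ j : Fin m, deriv (fun s => c s j) t = 0 := by
      intro t ht
      have hdiffc : ∀ j : Fin m, DifferentiableAt ℝ (fun s => c s j) t :=
        fun j => ((hcana j) t ht).differentiableAt
      have hdiffe : ∀ (n : ℕ) (j : Fin m), DifferentiableAt ℝ (iteratedDeriv n (g j)) t :=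
        fun n j => ((analytic_iteratedDeriv (hf j.castSucc) n) t (Set.mem_univ t)).differentiableAt
      have key : ∀ i : Fin m,
          ∑ j : Fin m, deriv (fun s => c s j) t * iteratedDeriv (i : ℕ) (g j) t = 0 := by
        intro i
        have hs1 : ∀ s ∈ U, ∑ j : Fin m, c s j * iteratedDeriv (i : ℕ) (g j) s
            = iteratedDeriv (i : ℕ) (f (Fin.last m)) s := by
          intro s hs
          simpa using hext s hs i.castSucc
        have hs2 : ∑ j : Fin m, c t j * iteratedDeriv ((i : ℕ) + 1) (g j) t
            = iteratedDeriv ((i : ℕ) + 1) (f (Fin.last m)) t := by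
          simpa using hext t ht i.succ
        simp only [iteratedDeriv_succ] at hs2
        have hEq : (fun s => ∑ j : Fin m, c s j * iteratedDeriv (i : ℕ) (g j) s)
            =ᶠ[nhds t] iteratedDeriv (i : ℕ) (f (Fin.last m)) := by
          filter_upwards [hUopen.mem_nhds ht] with s hs using hs1 s hs
        have hde := hEq.deriv_eq
        rw [deriv_fun_sum (fun j _ => ((hdiffc j).fun_mul (hdiffe _ j)))] at hde
        have h3 : (∑ j : Fin m, deriv (fun s => c s j) t * iteratedDeriv (i : ℕ) (g j) t)
            + ∑ j : Fin m, c t j * deriv (iteratedDeriv (i : ℕ) (g j)) t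
            = deriv (iteratedDeriv (i : ℕ) (f (Fin.last m))) t := by
          rw [← Finset.sum_add_distrib, ← hde]
          exact Finset.sum_congr rfl fun j _ => (deriv_fun_mul (hdiffc j) (hdiffe _ j)).symm
        rw [hs2] at h3
        have h4 : (∑ j : Fin m, deriv (fun s => c s j) t * iteratedDeriv (i : ℕ) (g j) t)
            + deriv (iteratedDeriv (i : ℕ) (f (Fin.last m))) t
            = 0 + deriv (iteratedDeriv (i : ℕ) (f (Fin.last m))) t := by
          rw [zero_add]; exact h3
        exact add_right_cancel h4
      have hvec : M t *ᵥ (fun j => deriv (fun s => c s j) t) = M t *ᵥ (0 : Fin m → ℂ) := by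
        rw [Matrix.mulVec_zero]
        funext i
        simp only [Matrix.mulVec, dotProduct, Pi.zero_apply, Matrix.of_apply, hMdef]
        rw [← key i]
        exact Finset.sum_congr rfl fun j _ => by ring
      have hz := mulVec_cancel ht hvec
      exact fun j => congrFun hz j
    obtain ⟨ε, hε, hball⟩ := Metric.isOpen_iff.mp hUopen t₀ ht₀U
    have hconst : ∀ s ∈ Metric.ball t₀ ε, ∀ j, c s j = c t₀ j := by
      intro s hs j
      refine (convex_ball t₀ ε).is_const_of_fderivWithin_eq_zero (𝕜 := ℝ)
        (f := fun s => c s j) ?_ ?_ hs (Metric.mem_ball_self hε)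
      · exact fun x hx => ((hcana j) x (hball hx)).differentiableAt.differentiableWithinAt
      · intro x hx
        rw [fderivWithin_of_isOpen Metric.isOpen_ball hx]
        ext
        rw [fderiv_apply_one_eq_deriv, hderiv0 x (hball hx) j]
        simp
    set h : ℝ → ℂ := fun s => f (Fin.last m) s - ∑ j, c t₀ j * g j s with hhdef
    have hzero : ∀ s ∈ Metric.ball t₀ ε, h s = 0 := by
      intro s hs
      have h0 := hext s (hball hs) 0
      simp only [Fin.val_zero, iteratedDeriv_zero] at h0
      rw [hhdef]
      simp only [sub_eq_zero]
      rw [← h0]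
      exact (Finset.sum_congr rfl fun j _ => by rw [hconst s hs j]).symm
    have hhana : AnalyticOnNhd ℝ h Set.univ := by
      exact (hf _).sub (Finset.analyticOnNhd_fun_sum _ fun j _ =>
        analyticOnNhd_const.mul (hf _))
    have hhzero : ∀ s, h s = 0 := by
      intro s
      have := hhana.eqOn_zero_of_preconnected_of_eventuallyEq_zero
        isPreconnected_univ (Set.mem_univ t₀)
        (Filter.eventuallyEq_of_mem (Metric.ball_mem_nhds t₀ hε) hzero)
      exact this (Set.mem_univ s)
    -- contradiction with linear independence
    have hli' : LinearIndependent ℂ (Fin.snoc (Fin.init f) (f (Fin.last m))) := by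
      rwa [Fin.snoc_init_self]
    have hnotmem := (linearIndependent_fin_snoc.mp hli').2
    apply hnotmem
    have : f (Fin.last m) = ∑ j, c t₀ j • Fin.init f j := by
      funext s
      have := hhzero s
      rw [hhdef] at this
      simp only [sub_eq_zero] at this
      rw [this, Finset.sum_apply]
      rfl
    rw [this]
    exact Submodule.sum_mem _ fun j _ =>
      Submodule.smul_mem _ _ (Submodule.subset_span ⟨j, rfl⟩)
end

section
/- The coefficients of the minimal equation are projectively linearly identifiable in the following sense: if c_0, …, c_n, d ∈ ℂ[t] are polynomials with deg c_ι ≤ deg q_ι for every ι (with the convention that c_ι = 0 whenever q_ι = 0) and deg d ≤ deg p (d = 0 if p = 0), and if ∑_{ι=0}^{n} c_ι(t)·x^{(ι)}(t) = d(t) for all t ∈ ℝ, then there exists a constant λ ∈ ℂ such that c_ι = λ·q_ι for all ι and d = λ·p. -/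
open Polynomial

/-- A complex polynomial vanishing at all real points is zero. -/
lemma aux_poly_eq_zero_of_real_eval (P : ℂ[X]) (h : ∀ t : ℝ, P.eval (t : ℂ) = 0) :
    P = 0 := by
  apply Polynomial.eq_zero_of_infinite_isRoot
  apply Set.Infinite.mono ?_ (Set.infinite_range_of_injective Complex.ofReal_injective)
  rintro z ⟨t, rfl⟩
  exact h t

/-- If a relation of order `n` has zero top coefficient, minimality forces
all of its coefficients to vanish. -/
lemma aux_key_relation (x : ℝ → ℂ) (n : ℕ) (S : Fin (n + 1) → ℂ[X]) (R : ℂ[X])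
    (hSN : S (Fin.last n) = 0)
    (hrel : ∀ t : ℝ, ∑ ι, (S ι).eval (t : ℂ) * iteratedDeriv (ι : ℕ) x t
      = R.eval (t : ℂ))
    (hmin : ∀ m : ℕ, m < n →
      ¬ ∃ (r : ℂ[X]) (s : Fin (m + 1) → ℂ[X]),
          (r ≠ 0 ∨ ∃ ι, s ι ≠ 0) ∧
          (∀ t : ℝ, ∑ ι, (s ι).eval (t : ℂ) * iteratedDeriv (ι : ℕ) x t
            = r.eval (t : ℂ))) :
    (∀ ι, S ι = 0) ∧ R = 0 := by
  cases n with
  | zero =>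
      have hall : ∀ ι : Fin 1, S ι = 0 := by
        intro ι
        have : ι = Fin.last 0 := Subsingleton.elim _ _
        rw [this]; exact hSN
      refine ⟨hall, ?_⟩
      apply aux_poly_eq_zero_of_real_eval
      intro t
      have := hrel t
      simp [hall] at this
      exact this.symm
  | succ m =>
      have hrel' : ∀ t : ℝ, ∑ ι : Fin (m + 1),
          (S ι.castSucc).eval (t : ℂ) * iteratedDeriv (ι : ℕ) x t = R.eval (t : ℂ) := by
        intro t
        have h := hrel t
        rw [Fin.sum_univ_castSucc] at h
        simp only [hSN, eval_zero, zero_mul, add_zero] at h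
        simpa using h
      have hfree : R = 0 ∧ ∀ i : Fin (m + 1), S i.castSucc = 0 := by
        by_contra hc
        apply hmin m (Nat.lt_succ_self m)
        refine ⟨R, fun i => S i.castSucc, ?_, hrel'⟩
        rcases eq_or_ne R 0 with hR | hR
        · right
          by_contra hall
          push_neg at hall
          exact hc ⟨hR, hall⟩
        · exact Or.inl hR
      refine ⟨?_, hfree.1⟩
      intro ι
      refine Fin.lastCases ?_ ?_ ι
      · exact hSN
      · intro i; exact hfree.2 i

/-- projective linear identifiability of the coefficients of the
minimal equation: any equation with coefficients of no larger degrees is a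
constant multiple of the minimal one. -/
theorem coefficients_projectively_linearly_identifiable
    (x : ℝ → ℂ) (hx : AnalyticOnNhd ℝ x Set.univ) (hx0 : x ≠ 0)
    (n : ℕ) (p : ℂ[X]) (q : Fin (n + 1) → ℂ[X])
    (hqn : q (Fin.last n) ≠ 0)
    (hcop : ¬ ∃ d : ℂ[X], 0 < d.natDegree ∧ d ∣ p ∧ ∀ ι, d ∣ q ι)
    (heq : ∀ t : ℝ, ∑ ι, (q ι).eval (t : ℂ) * iteratedDeriv (ι : ℕ) x t
      = p.eval (t : ℂ))
    -- minimality: no nonzero relation of order `m < n`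
    (hmin : ∀ m : ℕ, m < n →
      ¬ ∃ (r : ℂ[X]) (s : Fin (m + 1) → ℂ[X]),
          (r ≠ 0 ∨ ∃ ι, s ι ≠ 0) ∧
          (∀ t : ℝ, ∑ ι, (s ι).eval (t : ℂ) * iteratedDeriv (ι : ℕ) x t
            = r.eval (t : ℂ)))
    (c : Fin (n + 1) → ℂ[X]) (d : ℂ[X])
    (hdegc : ∀ ι, (c ι).degree ≤ (q ι).degree)
    (hdegd : d.degree ≤ p.degree)
    (heq' : ∀ t : ℝ, ∑ ι, (c ι).eval (t : ℂ) * iteratedDeriv (ι : ℕ) x t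
      = d.eval (t : ℂ)) :
    ∃ lam : ℂ, (∀ ι, c ι = C lam * q ι) ∧ d = C lam * p := by
  classical
  set N := Fin.last n with hN
  set lam := (c N).coeff (q N).natDegree / (q N).leadingCoeff with hlam
  refine ⟨lam, ?_⟩
  set C' : Fin (n + 1) → ℂ[X] := fun ι => c ι - C lam * q ι with hC'
  set D' : ℂ[X] := d - C lam * p with hD'
  -- the difference relation
  have hE : ∀ t : ℝ, ∑ ι, (C' ι).eval (t : ℂ) * iteratedDeriv (ι : ℕ) x t
      = D'.eval (t : ℂ) := by
    intro t
    simp only [hC', hD', eval_sub, eval_mul, eval_C, sub_mul, mul_assoc]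
    rw [Finset.sum_sub_distrib, heq' t, ← Finset.mul_sum, heq t]
  -- degree drop at the top
  have hltN : (C' N).degree < (q N).degree := by
    rw [degree_eq_natDegree hqn]
    rw [Polynomial.degree_lt_iff_coeff_zero]
    intro m hm
    have hm' : (q N).natDegree ≤ m := by exact_mod_cast hm
    rcases eq_or_lt_of_le hm' with hm2 | hm2
    · subst hm2
      simp only [hC', coeff_sub, coeff_C_mul, coeff_natDegree]
      rw [hlam, div_mul_cancel₀ _ (leadingCoeff_ne_zero.mpr hqn), sub_self]
    · have h1 : (c N).coeff m = 0 := by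
        apply coeff_eq_zero_of_degree_lt
        calc (c N).degree ≤ (q N).degree := hdegc N
          _ = ((q N).natDegree : WithBot ℕ) := degree_eq_natDegree hqn
          _ < (m : WithBot ℕ) := by exact_mod_cast hm2
      have h2 : (q N).coeff m = 0 := coeff_eq_zero_of_natDegree_lt hm2
      simp [hC', coeff_sub, coeff_C_mul, h1, h2]
  -- combined relation of lower order
  have hS : ∀ t : ℝ, ∑ ι, ((q N * C' ι - C' N * q ι)).eval (t : ℂ)
      * iteratedDeriv (ι : ℕ) x t = (q N * D' - C' N * p).eval (t : ℂ) := by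
    intro t
    simp only [eval_sub, eval_mul, sub_mul, mul_assoc]
    rw [Finset.sum_sub_distrib, ← Finset.mul_sum, ← Finset.mul_sum, hE t, heq t]
  have hSN : q N * C' N - C' N * q N = 0 := by ring
  obtain ⟨hall, hR⟩ := aux_key_relation x n (fun ι => q N * C' ι - C' N * q ι)
    (q N * D' - C' N * p) hSN hS hmin
  have key : ∀ ι, q N * C' ι = C' N * q ι := fun ι => sub_eq_zero.mp (hall ι)
  have keyR : q N * D' = C' N * p := sub_eq_zero.mp hR
  -- the top difference coefficient must vanish
  have hCN0 : C' N = 0 := by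
    by_contra hT
    set g := GCDMonoid.gcd (q N) (C' N) with hg
    have hg0 : g ≠ 0 := gcd_ne_zero_of_left hqn
    set a := q N / g with ha
    set b := C' N / g with hb
    have haq : g * a = q N :=
      EuclideanDomain.mul_div_cancel' hg0 (gcd_dvd_left _ _)
    have hbq : g * b = C' N :=
      EuclideanDomain.mul_div_cancel' hg0 (gcd_dvd_right _ _)
    have hab : IsCoprime a b := isCoprime_div_gcd_div_gcd hT
    have ha0 : a ≠ 0 := by
      intro h
      apply hqn
      rw [← haq, h, mul_zero]
    have hdvdq : ∀ ι, a ∣ q ι := by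
      intro ι
      have h1 : g * (a * C' ι) = g * (b * q ι) := by
        rw [← mul_assoc, ← mul_assoc, haq, hbq]; exact key ι
      have h2 : a * C' ι = b * q ι := mul_left_cancel₀ hg0 h1
      exact hab.dvd_of_dvd_mul_left ⟨C' ι, h2.symm⟩
    have hdvdp : a ∣ p := by
      have h1 : g * (a * D') = g * (b * p) := by
        rw [← mul_assoc, ← mul_assoc, haq, hbq]; exact keyR
      have h2 : a * D' = b * p := mul_left_cancel₀ hg0 h1
      exact hab.dvd_of_dvd_mul_left ⟨D', h2.symm⟩
    have hadeg : a.natDegree = 0 := by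
      by_contra h
      exact hcop ⟨a, Nat.pos_of_ne_zero h, hdvdp, hdvdq⟩
    have haU : IsUnit a := by
      apply Polynomial.isUnit_iff_degree_eq_zero.mpr
      rw [degree_eq_natDegree ha0, hadeg]
      rfl
    have hqdvd : q N ∣ C' N := by
      rw [← haq]
      rw [mul_comm g a]
      exact (haU.mul_left_dvd).mpr ⟨b, hbq.symm⟩
    exact absurd (Polynomial.degree_le_of_dvd hqdvd hT) (not_le.mpr hltN)
  -- conclude
  have hCz : ∀ ι, C' ι = 0 := by
    intro ι
    have := key ι
    rw [hCN0, zero_mul] at this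
    rcases mul_eq_zero.mp this with h | h
    · exact absurd h hqn
    · exact h
  have hDz : D' = 0 := by
    have := keyR
    rw [hCN0, zero_mul] at this
    rcases mul_eq_zero.mp this with h | h
    · exact absurd h hqn
    · exact h
  constructor
  · intro ι
    have := hCz ι
    rw [hC'] at this
    exact sub_eq_zero.mp this
  · exact sub_eq_zero.mp hDz
end

section
/- For every k ≥ 1, every real Ω > 0, every A, φ ∈ ℝ and every t ≥ 0, the k-fold iterated integral of the sinusoid w(τ) = A·sin(Ω·τ + φ) satisfies |I_k w (t)| ≤ 2·|A|·t^{k−1} / ((k−1)! · Ω); in particular the contribution of a sinusoidal perturbation of frequency Ω to any iterated-integral estimator is of order A/Ω. -/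
/-- The `k`-fold iterated integral from `0`: `iterInt f 1 = ∫₀ᵗ f`,
`iterInt f (k+1) t = ∫₀ᵗ iterInt f k`. (`iterInt f 0 = f`.) -/
noncomputable def iterInt (f : ℝ → ℝ) : ℕ → ℝ → ℝ
  | 0 => f
  | k + 1 => fun t => ∫ τ in (0:ℝ)..t, iterInt f k τ

lemma iterInt_continuous {f : ℝ → ℝ} (hf : Continuous f) (k : ℕ) :
    Continuous (iterInt f k) := by
  induction k with
  | zero => exact hf
  | succ n ih =>
    exact intervalIntegral.continuous_primitive
      (fun a b => (ih.intervalIntegrable a b)) 0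

lemma sinusoid_bound_aux (Ω A φ : ℝ) (hΩ : 0 < Ω) (n : ℕ) :
    ∀ t, 0 ≤ t →
    |iterInt (fun τ => A * Real.sin (Ω * τ + φ)) (n + 1) t| ≤
      2 * |A| * t ^ n / ((Nat.factorial n : ℝ) * Ω) := by
  set f : ℝ → ℝ := fun τ => A * Real.sin (Ω * τ + φ) with hf
  have hfc : Continuous f := by fun_prop
  induction n with
  | zero =>
    intro t ht
    have : iterInt f 1 t = ∫ τ in (0:ℝ)..t, A * Real.sin (Ω * τ + φ) := rfl
    rw [this, intervalIntegral.integral_const_mul,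
      intervalIntegral.integral_comp_mul_add Real.sin (ne_of_gt hΩ) φ]
    rw [integral_sin]
    simp only [smul_eq_mul, abs_mul]
    have h1 : |Ω⁻¹| = Ω⁻¹ := abs_of_pos (by positivity)
    have h2 : |Real.cos (Ω * 0 + φ) - Real.cos (Ω * t + φ)| ≤ 2 := by
      calc |Real.cos (Ω * 0 + φ) - Real.cos (Ω * t + φ)|
          ≤ |Real.cos (Ω * 0 + φ)| + |Real.cos (Ω * t + φ)| := abs_sub _ _
        _ ≤ 1 + 1 := add_le_add (Real.abs_cos_le_one _) (Real.abs_cos_le_one _)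
        _ = 2 := by norm_num
    calc |A| * (|Ω⁻¹| * |Real.cos (Ω * 0 + φ) - Real.cos (Ω * t + φ)|)
        ≤ |A| * (Ω⁻¹ * 2) := by
          rw [h1]; gcongr
      _ = 2 * |A| * t ^ 0 / ((Nat.factorial 0 : ℝ) * Ω) := by
          simp [Nat.factorial]; ring
  | succ n ih =>
    intro t ht
    have heq : iterInt f (n + 2) t = ∫ τ in (0:ℝ)..t, iterInt f (n + 1) τ := rfl
    rw [heq]
    have hic := iterInt_continuous hfc (n + 1)
    have step1 : |∫ τ in (0:ℝ)..t, iterInt f (n + 1) τ|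
        ≤ ∫ τ in (0:ℝ)..t, |iterInt f (n + 1) τ| := by
      simpa [Real.norm_eq_abs] using
        intervalIntegral.norm_integral_le_integral_norm (f := iterInt f (n+1))
          (μ := MeasureTheory.volume) ht
    have step2 : ∫ τ in (0:ℝ)..t, |iterInt f (n + 1) τ|
        ≤ ∫ τ in (0:ℝ)..t, 2 * |A| / ((Nat.factorial n : ℝ) * Ω) * τ ^ n := by
      apply intervalIntegral.integral_mono_on ht
      · exact (hic.abs).intervalIntegrable 0 t
      · exact (Continuous.intervalIntegrable (by fun_prop) 0 t)
      · intro x hx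
        have := ih x hx.1
        calc |iterInt f (n + 1) x| ≤ 2 * |A| * x ^ n / ((Nat.factorial n : ℝ) * Ω) := this
          _ = 2 * |A| / ((Nat.factorial n : ℝ) * Ω) * x ^ n := by ring
    have step3 : ∫ τ in (0:ℝ)..t, 2 * |A| / ((Nat.factorial n : ℝ) * Ω) * τ ^ n
        = 2 * |A| * t ^ (n + 1) / ((Nat.factorial (n + 1) : ℝ) * Ω) := by
      rw [intervalIntegral.integral_const_mul, integral_pow]
      have hfn : (Nat.factorial (n + 1) : ℝ) = (n + 1) * (Nat.factorial n : ℝ) := by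
        push_cast [Nat.factorial_succ]; ring
      rw [hfn]
      have h1 : (Nat.factorial n : ℝ) ≠ 0 := by positivity
      field_simp
      ring_nf
    linarith

/-- the contribution of a sinusoidal perturbation of frequency `Ω`
to the `k`-fold iterated integral is of order `A / Ω`. -/
theorem iterated_integral_sinusoid_bound
    (k : ℕ) (hk : 1 ≤ k) (Ω A φ : ℝ) (hΩ : 0 < Ω) (t : ℝ) (ht : 0 ≤ t) :
    |iterInt (fun τ => A * Real.sin (Ω * τ + φ)) k t| ≤
      2 * |A| * t ^ (k - 1) / ((Nat.factorial (k - 1) : ℝ) * Ω) := by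
  obtain ⟨n, rfl⟩ := Nat.exists_eq_add_of_le hk
  simpa [Nat.add_comm] using sinusoid_bound_aux Ω A φ hΩ n t ht
end

section
/- If the hyperreal quotient ofSeq(A)/ofSeq(Ω) is infinitesimal, then for every natural number ν, every φ ∈ ℝ and every standard real t ≥ 0, the hyperreal ofSeq(fun n ↦ ∫_0^t τ^ν · A_n · sin(Ω_n·τ + φ) dτ) is infinitesimal; thus a high-frequency sinusoidal perturbation with infinitesimal amplitude-to-frequency ratio contributes only infinitesimally to the iterated-integral estimates. -/
open Hyperreal

private theorem sin_int_bound (Ω φ : ℝ) (hΩ : 0 < Ω) (t : ℝ) (ht : 0 ≤ t) (ν : ℕ) :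
    |∫ τ in (0:ℝ)..t, τ ^ ν * Real.sin (Ω * τ + φ)| ≤ (2 * t ^ ν + 1) / Ω := by
  have hΩ' : Ω ≠ 0 := ne_of_gt hΩ
  have hv : ∀ x : ℝ, HasDerivAt (fun τ => -Real.cos (Ω * τ + φ) / Ω)
      (Real.sin (Ω * x + φ)) x := by
    intro x
    have h1 : HasDerivAt (fun τ : ℝ => Ω * τ + φ) Ω x := by
      simpa using ((hasDerivAt_id x).const_mul Ω).add_const φ
    have := (h1.cos).neg.div_const Ω
    convert this using 1
    · rfl
    · rfl
    · rfl
    · field_simp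
  have hu : ∀ x : ℝ, HasDerivAt (fun τ : ℝ => τ ^ ν) ((ν : ℝ) * x ^ (ν - 1)) x :=
    fun x => hasDerivAt_pow ν x
  have hparts := intervalIntegral.integral_mul_deriv_eq_deriv_mul
    (a := (0:ℝ)) (b := t) (u := fun τ : ℝ => τ ^ ν)
    (u' := fun τ : ℝ => (ν : ℝ) * τ ^ (ν - 1))
    (v := fun τ => -Real.cos (Ω * τ + φ) / Ω) (v' := fun τ => Real.sin (Ω * τ + φ))
    (fun x _ => hu x) (fun x _ => hv x)
    (by apply Continuous.intervalIntegrable; fun_prop)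
    (by apply Continuous.intervalIntegrable; fun_prop)
  rw [hparts]
  have hpt : (0:ℝ) ≤ t ^ ν := pow_nonneg ht ν
  have h1 : |t ^ ν * (-Real.cos (Ω * t + φ) / Ω)| ≤ t ^ ν / Ω := by
    rw [abs_mul, abs_div, abs_neg, abs_of_nonneg hpt, abs_of_pos hΩ, mul_div_assoc']
    exact (div_le_div_iff_of_pos_right hΩ).mpr
      (mul_le_of_le_one_right hpt (Real.abs_cos_le_one _))
  have h2 : |(0:ℝ) ^ ν * (-Real.cos (Ω * 0 + φ) / Ω)| ≤ 1 / Ω := by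
    rw [abs_mul, abs_div, abs_neg, abs_of_pos hΩ, mul_div_assoc']
    refine (div_le_div_iff_of_pos_right hΩ).mpr ?_
    calc |(0:ℝ) ^ ν| * |Real.cos (Ω * 0 + φ)| ≤ 1 * 1 := by
          apply mul_le_mul _ (Real.abs_cos_le_one _) (abs_nonneg _) zero_le_one
          rw [abs_pow, abs_zero]
          exact pow_le_one₀ le_rfl zero_le_one
      _ = 1 := one_mul 1
  have h3 : |∫ τ in (0:ℝ)..t, (ν:ℝ) * τ ^ (ν - 1) * (-Real.cos (Ω * τ + φ) / Ω)|
      ≤ t ^ ν / Ω := by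
    rcases ν with _ | m
    · simp only [Nat.cast_zero, zero_mul, intervalIntegral.integral_zero, abs_zero, pow_zero]
      positivity
    · have key : ∀ τ ∈ Set.Icc (0:ℝ) t,
          |(↑(m+1):ℝ) * τ ^ (m + 1 - 1) * (-Real.cos (Ω * τ + φ) / Ω)|
            ≤ (↑(m+1):ℝ) * τ ^ m / Ω := by
        intro τ hτ
        have hτ0 : (0:ℝ) ≤ τ := hτ.1
        rw [abs_mul, abs_div, abs_neg, abs_of_pos hΩ, abs_mul, abs_pow,
          Nat.add_sub_cancel, abs_of_nonneg hτ0, mul_div_assoc',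
          Nat.abs_cast]
        refine (div_le_div_iff_of_pos_right hΩ).mpr ?_
        exact mul_le_of_le_one_right (by positivity) (Real.abs_cos_le_one _)
      calc |∫ τ in (0:ℝ)..t, (↑(m+1):ℝ) * τ ^ (m + 1 - 1) * (-Real.cos (Ω * τ + φ) / Ω)|
          ≤ ∫ τ in (0:ℝ)..t, |(↑(m+1):ℝ) * τ ^ (m + 1 - 1) * (-Real.cos (Ω * τ + φ) / Ω)| := by
            exact intervalIntegral.abs_integral_le_integral_abs ht
        _ ≤ ∫ τ in (0:ℝ)..t, (↑(m+1):ℝ) * τ ^ m / Ω := by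
            apply intervalIntegral.integral_mono_on ht
            · apply IntervalIntegrable.abs
              apply Continuous.intervalIntegrable; fun_prop
            · apply Continuous.intervalIntegrable; fun_prop
            · exact key
        _ = t ^ (m+1) / Ω := by
            rw [intervalIntegral.integral_div, intervalIntegral.integral_const_mul,
              integral_pow]
            push_cast
            field_simp
            simp
  calc |t ^ ν * (-Real.cos (Ω * t + φ) / Ω) - (0:ℝ) ^ ν * (-Real.cos (Ω * 0 + φ) / Ω)
        - ∫ τ in (0:ℝ)..t, (ν:ℝ) * τ ^ (ν - 1) * (-Real.cos (Ω * τ + φ) / Ω)|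
      ≤ |t ^ ν * (-Real.cos (Ω * t + φ) / Ω) - (0:ℝ) ^ ν * (-Real.cos (Ω * 0 + φ) / Ω)|
        + |∫ τ in (0:ℝ)..t, (ν:ℝ) * τ ^ (ν - 1) * (-Real.cos (Ω * τ + φ) / Ω)| :=
        abs_sub _ _
    _ ≤ |t ^ ν * (-Real.cos (Ω * t + φ) / Ω)| + |(0:ℝ) ^ ν * (-Real.cos (Ω * 0 + φ) / Ω)|
        + |∫ τ in (0:ℝ)..t, (ν:ℝ) * τ ^ (ν - 1) * (-Real.cos (Ω * τ + φ) / Ω)| := by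
        gcongr
        exact abs_sub _ _
    _ ≤ t ^ ν / Ω + 1 / Ω + t ^ ν / Ω := add_le_add (add_le_add h1 h2) h3
    _ = (2 * t ^ ν + 1) / Ω := by ring

/-- a high-frequency sinusoidal perturbation whose
amplitude-to-frequency ratio is infinitesimal contributes only infinitesimally
to the iterated-integral estimates. -/
theorem sinusoid_contribution_infinitesimal
    (A Ω : ℕ → ℝ) (hΩ : ∀ n, 0 < Ω n)
    (h : Infinitesimal (ofSeq A / ofSeq Ω))
    (ν : ℕ) (φ : ℝ) (t : ℝ) (ht : 0 ≤ t) :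
    Infinitesimal (ofSeq fun n =>
      ∫ τ in (0:ℝ)..t, τ ^ ν * (A n * Real.sin (Ω n * τ + φ))) := by
  have hdiv : ofSeq A / ofSeq Ω = ofSeq (fun n => A n / Ω n) := rfl
  rw [hdiv] at h
  have h' : Filter.Tendsto (fun n => A n / Ω n) (Filter.hyperfilter ℕ) (nhds 0) :=
    isSt_ofSeq_iff_tendsto.1 h
  rw [Infinitesimal] at *
  rw [isSt_ofSeq_iff_tendsto]
  set C : ℝ := 2 * t ^ ν + 1 with hC
  have hC0 : (0:ℝ) ≤ C := by positivity
  apply squeeze_zero_norm (a := fun n => C * |A n / Ω n|) (f := fun n =>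
      ∫ τ in (0:ℝ)..t, τ ^ ν * (A n * Real.sin (Ω n * τ + φ)))
  · intro n
    have hpull : (∫ τ in (0:ℝ)..t, τ ^ ν * (A n * Real.sin (Ω n * τ + φ)))
        = A n * ∫ τ in (0:ℝ)..t, τ ^ ν * Real.sin (Ω n * τ + φ) := by
      rw [← intervalIntegral.integral_const_mul]
      congr 1; funext τ; ring
    rw [Real.norm_eq_abs, hpull, abs_mul]
    calc |A n| * |∫ τ in (0:ℝ)..t, τ ^ ν * Real.sin (Ω n * τ + φ)|
        ≤ |A n| * (C / Ω n) :=
          mul_le_mul_of_nonneg_left (sin_int_bound (Ω n) φ (hΩ n) t ht ν) (abs_nonneg _)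
      _ = C * |A n / Ω n| := by
          rw [abs_div, abs_of_pos (hΩ n)]; ring
  · simpa using h'.abs.const_mul C
end
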